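/- Let γ > 1 and v₊ > 0 be given. Then there exist constants C, δ* > 0 such that for any 0 < δ < δ* and any (v,w) ∈ ℝ₊² satisfying |p(v) − p(w)| < δ and |p(w) − p(v₊)| < δ, the following three inequalities hold: p(v|w) ≤ ((γ+1)/(2γ)·1/p(w) + Cδ)|p(v) − p(w)|²; Q(v|w) ≥ (p(w)^{−1/γ−1}/(2γ))|p(v) − p(w)|² − ((1+γ)/(3γ²))·p(w)^{−1/γ−2}·(p(v) − p(w))³; and Q(v|w) ≤ (p(w)^{−1/γ−1}/(2γ) + Cδ)|p(v) − p(w)|². -/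

import Mathlib

noncomputable section
open MeasureTheory Set Filter Topology Real

namespace NS3D

abbrev Spc : Type := EuclideanSpace ℝ (Fin 3)

def e (i : Fin 3) : Spc := EuclideanSpace.single i 1

def PeriodicTD {F : Type*} (f : Spc → F) : Prop :=
  ∀ x : Spc, f (x + e 1) = f x ∧ f (x + e 2) = f x

def cell : Set Spc := {x : Spc | x 1 ∈ Icc (0:ℝ) 1 ∧ x 2 ∈ Icc (0:ℝ) 1}
def cellP : Set Spc := {x : Spc | 0 < x 0 ∧ x 1 ∈ Icc (0:ℝ) 1 ∧ x 2 ∈ Icc (0:ℝ) 1}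
def cellM : Set Spc := {x : Spc | x 0 < 0 ∧ x 1 ∈ Icc (0:ℝ) 1 ∧ x 2 ∈ Icc (0:ℝ) 1}
def cube : Set Spc := {x : Spc | x 0 ∈ Icc (0:ℝ) 1 ∧ x 1 ∈ Icc (0:ℝ) 1 ∧ x 2 ∈ Icc (0:ℝ) 1}

variable {F : Type*} [NormedAddCommGroup F] [NormedSpace ℝ F]

def L2Sq (s : Set Spc) (f : Spc → F) : ℝ := ∫ x in s, ‖f x‖^2
def L2 (s : Set Spc) (f : Spc → F) : ℝ := Real.sqrt (L2Sq s f)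
def MemL2 (s : Set Spc) (f : Spc → F) : Prop := IntegrableOn (fun x => ‖f x‖^2) s volume

def DSq (n : ℕ) (f : Spc → F) : ℝ := ∫ x in cell, ‖iteratedFDeriv ℝ n f x‖^2
def MemDSq (n : ℕ) (f : Spc → F) : Prop :=
  IntegrableOn (fun x => ‖iteratedFDeriv ℝ n f x‖^2) cell volume

def HSq (k : ℕ) (f : Spc → F) : ℝ := ∑ n ∈ Finset.range (k+1), DSq n f
def Hnorm (k : ℕ) (f : Spc → F) : ℝ := Real.sqrt (HSq k f)
def MemH (k : ℕ) (f : Spc → F) : Prop := ∀ n, n ≤ k → MemDSq n f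

def GradHSq (k : ℕ) (f : Spc → F) : ℝ := ∑ n ∈ Finset.Icc 1 (k+1), DSq n f
def GradHnorm (k : ℕ) (f : Spc → F) : ℝ := Real.sqrt (GradHSq k f)
def MemGradH (k : ℕ) (f : Spc → F) : Prop := ∀ n, 1 ≤ n → n ≤ k+1 → MemDSq n f

def ContHk (k : ℕ) (I : Set ℝ) (f : ℝ → Spc → F) : Prop :=
  (∀ t ∈ I, MemH k (f t)) ∧
  ∀ s ∈ I, Tendsto (fun t => HSq k (fun x => f t x - f s x)) (𝓝[I] s) (𝓝 (0:ℝ))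

def grad (f : Spc → ℝ) (x : Spc) : Spc :=
  (WithLp.equiv 2 (Fin 3 → ℝ)).symm (fun i => fderiv ℝ f x (e i))
def divg (u : Spc → Spc) (x : Spc) : ℝ := ∑ i, fderiv ℝ (fun y => u y i) x (e i)
def lap (f : Spc → ℝ) (x : Spc) : ℝ :=
  ∑ i, fderiv ℝ (fun y => fderiv ℝ f y (e i)) x (e i)
def vec3 (a b c : ℝ) : Spc := (WithLp.equiv 2 (Fin 3 → ℝ)).symm ![a, b, c]
def uvec (a : ℝ) : Spc := vec3 a 0 0
def curl (u : Spc → Spc) (x : Spc) : Spc :=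
  vec3 (fderiv ℝ (fun y => u y 2) x (e 1) - fderiv ℝ (fun y => u y 1) x (e 2))
       (fderiv ℝ (fun y => u y 0) x (e 2) - fderiv ℝ (fun y => u y 2) x (e 0))
       (fderiv ℝ (fun y => u y 1) x (e 0) - fderiv ℝ (fun y => u y 0) x (e 1))

def pfn (γ v : ℝ) : ℝ := v ^ (-γ)
def pderivfn (γ v : ℝ) : ℝ := -γ * v ^ (-γ - 1)
def Qfn (γ v : ℝ) : ℝ := v ^ (1 - γ) / (γ - 1)
def pRel (γ v w : ℝ) : ℝ := pfn γ v - pfn γ w - pderivfn γ w * (v - w)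
def QRel (γ v w : ℝ) : ℝ := Qfn γ v - Qfn γ w + pfn γ w * (v - w)

structure RHLax (γ σ1s σ2s vminus uminus vm um vplus uplus : ℝ) : Prop where
  posminus : 0 < vminus
  posm : 0 < vm
  posplus : 0 < vplus
  rh1v : -σ1s * (vm - vminus) = um - uminus
  rh1u : -σ1s * (um - uminus) + (pfn γ vm - pfn γ vminus) = 0
  lax1v : vm < vminus
  lax1u : um < uminus
  rh2v : -σ2s * (vplus - vm) = uplus - um
  rh2u : -σ2s * (uplus - um) + (pfn γ vplus - pfn γ vm) = 0
  lax2v : vm < vplus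
  lax2u : uplus < um

structure ViscousShock (γ μ lam σs vL uL vR uR : ℝ) (vt ut : ℝ → ℝ) : Prop where
  smooth_v : ContDiff ℝ 3 vt
  smooth_u : ContDiff ℝ 3 ut
  pos : ∀ ξ, 0 < vt ξ
  ode1 : ∀ ξ, -σs * deriv vt ξ = deriv ut ξ
  ode2 : ∀ ξ, -σs * deriv ut ξ + deriv (fun y => pfn γ (vt y)) ξ
            = (2*μ+lam) * deriv (deriv ut) ξ
  limL_v : Tendsto vt atBot (𝓝 vL)
  limL_u : Tendsto ut atBot (𝓝 uL)
  limR_v : Tendsto vt atTop (𝓝 vR)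
  limR_u : Tendsto ut atTop (𝓝 uR)

def heff (μ lam : ℝ) (vt ut : ℝ → ℝ) (ξ : ℝ) : ℝ := ut ξ - (2*μ+lam) * deriv vt ξ
def wgt (γ δ ν vm : ℝ) (vt : ℝ → ℝ) (ξ : ℝ) : ℝ := 1 + ν * (pfn γ vm - pfn γ (vt ξ)) / δ

def vcompY (c σ1 σ2 : ℝ) (f1 f2 : ℝ → ℝ) (t Y1 Y2 x1 : ℝ) : ℝ :=
  f1 (x1 - σ1*t - Y1) + f2 (x1 - σ2*t - Y2) - c
def acompY (γ vm σ1 σ2 δ1 δ2 ν1 ν2 : ℝ) (vt1 vt2 : ℝ → ℝ) (t Y1 Y2 x1 : ℝ) : ℝ :=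
  wgt γ δ1 ν1 vm vt1 (x1 - σ1*t - Y1) + wgt γ δ2 ν2 vm vt2 (x1 - σ2*t - Y2) - 1

def sigm (γ vm : ℝ) : ℝ := Real.sqrt (γ * vm ^ (-γ - 1))
def alpham (γ vm : ℝ) : ℝ := (γ + 1) / (2 * γ * sigm γ vm * pfn γ vm)
def Mconst (γ vm : ℝ) : ℝ := (5/4) * (sigm γ vm)^4 * vm^2 * alpham γ vm

def cutoff1 (σ1 σ2 t x1 : ℝ) : ℝ :=
  if x1 ≤ (3*σ1+σ2)/4 * t then 1
  else if (σ1+3*σ2)/4 * t ≤ x1 then 0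
  else ((σ1+3*σ2)/4 * t - x1) / ((σ1+3*σ2)/4 * t - (3*σ1+σ2)/4 * t)
def cutoff2 (σ1 σ2 t x1 : ℝ) : ℝ := 1 - cutoff1 σ1 σ2 t x1

def shiftF1 (γ μ lam vm σ1 σ2 σ1s δ1 δ2 ν1 ν2 M : ℝ) (vt1 ut1 vt2 : ℝ → ℝ)
    (v : ℝ → Spc → ℝ) (t Y1 Y2 : ℝ) : ℝ :=
  -(M/δ1) *
    ((∫ x in cell, (acompY γ vm σ1 σ2 δ1 δ2 ν1 ν2 vt1 vt2 t Y1 Y2 (x 0) / σ1s)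
        * deriv (heff μ lam vt1 ut1) (x 0 - σ1*t - Y1)
        * (pfn γ (v t x) - pfn γ (vcompY vm σ1 σ2 vt1 vt2 t Y1 Y2 (x 0))))
     - ∫ x in cell, acompY γ vm σ1 σ2 δ1 δ2 ν1 ν2 vt1 vt2 t Y1 Y2 (x 0)
        * deriv (fun y => pfn γ (vt1 y)) (x 0 - σ1*t - Y1)
        * (v t x - vcompY vm σ1 σ2 vt1 vt2 t Y1 Y2 (x 0)))
def shiftF2 (γ μ lam vm σ1 σ2 σ2s δ1 δ2 ν1 ν2 M : ℝ) (vt1 vt2 ut2 : ℝ → ℝ)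
    (v : ℝ → Spc → ℝ) (t Y1 Y2 : ℝ) : ℝ :=
  -(M/δ2) *
    ((∫ x in cell, (acompY γ vm σ1 σ2 δ1 δ2 ν1 ν2 vt1 vt2 t Y1 Y2 (x 0) / σ2s)
        * deriv (heff μ lam vt2 ut2) (x 0 - σ2*t - Y2)
        * (pfn γ (v t x) - pfn γ (vcompY vm σ1 σ2 vt1 vt2 t Y1 Y2 (x 0))))
     - ∫ x in cell, acompY γ vm σ1 σ2 δ1 δ2 ν1 ν2 vt1 vt2 t Y1 Y2 (x 0)
        * deriv (fun y => pfn γ (vt2 y)) (x 0 - σ2*t - Y2)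
        * (v t x - vcompY vm σ1 σ2 vt1 vt2 t Y1 Y2 (x 0)))

def ShiftODE (γ μ lam vm σ1 σ2 σ1s σ2s δ1 δ2 ν1 ν2 T : ℝ)
    (vt1 ut1 vt2 ut2 : ℝ → ℝ) (v : ℝ → Spc → ℝ) (X1 X2 dX1 dX2 : ℝ → ℝ) : Prop :=
  X1 0 = 0 ∧ X2 0 = 0 ∧
  ∀ t ∈ Icc 0 T,
    HasDerivAt X1 (dX1 t) t ∧ HasDerivAt X2 (dX2 t) t ∧
    dX1 t = shiftF1 γ μ lam vm σ1 σ2 σ1s δ1 δ2 ν1 ν2 (Mconst γ vm) vt1 ut1 vt2 v t (X1 t) (X2 t) ∧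
    dX2 t = shiftF2 γ μ lam vm σ1 σ2 σ2s δ1 δ2 ν1 ν2 (Mconst γ vm) vt1 vt2 ut2 v t (X1 t) (X2 t)

def NSvol (γ μ lam : ℝ) (I : Set ℝ) (v : ℝ → Spc → ℝ) (u : ℝ → Spc → Spc) : Prop :=
  (∀ t ∈ I, PeriodicTD (v t) ∧ PeriodicTD (u t)) ∧
  ∀ t ∈ I, ∀ x : Spc,
    0 < v t x ∧
    (1 / v t x) * (deriv (fun s => v s x) t + fderiv ℝ (v t) x (u t x)) = divg (u t) x ∧
    (1 / v t x) • (deriv (fun s => u s x) t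
        + (WithLp.equiv 2 (Fin 3 → ℝ)).symm (fun i => fderiv ℝ (fun y => u t y i) x (u t x)))
      + grad (fun y => pfn γ (v t y)) x
    = (2*μ+lam) • grad (fun y => divg (u t) y) x - μ • curl (curl (u t)) x

def NSdens (γ b μ lam : ℝ) (I : Set ℝ) (ρ : ℝ → Spc → ℝ) (u : ℝ → Spc → Spc) : Prop :=
  (∀ t ∈ I, PeriodicTD (ρ t) ∧ PeriodicTD (u t)) ∧
  ∀ t ∈ I, ∀ x : Spc,
    0 < ρ t x ∧
    (deriv (fun s => ρ s x) t + divg (fun y => ρ t y • u t y) x = 0) ∧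
    ∀ i : Fin 3,
      deriv (fun s => ρ s x * u s x i) t
        + divg (fun y => (ρ t y * u t y i) • u t y) x
        + fderiv ℝ (fun y => b * ρ t y ^ γ) x (e i)
      = μ * lap (fun y => u t y i) x
        + (μ+lam) * fderiv ℝ (fun y => divg (u t) y) x (e i)

structure RHLaxDens (γ b σ1 σ2 ρminus uminus ρm um ρplus uplus : ℝ) : Prop where
  posminus : 0 < ρminus
  posm : 0 < ρm
  posplus : 0 < ρplus
  rh1m : -σ1 * (ρm - ρminus) + (ρm * um - ρminus * uminus) = 0
  rh1mom : -σ1 * (ρm * um - ρminus * uminus) + (ρm * um^2 - ρminus * uminus^2)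
      + (b * ρm ^ γ - b * ρminus ^ γ) = 0
  lax1ρ : ρminus < ρm
  lax1u : um < uminus
  rh2m : -σ2 * (ρplus - ρm) + (ρplus * uplus - ρm * um) = 0
  rh2mom : -σ2 * (ρplus * uplus - ρm * um) + (ρplus * uplus^2 - ρm * um^2)
      + (b * ρplus ^ γ - b * ρm ^ γ) = 0
  lax2ρ : ρplus < ρm
  lax2u : uplus < um

structure ViscousShockDens (γ b μ lam σ ρL uL ρR uR : ℝ) (ρt ut : ℝ → ℝ) : Prop where
  smooth_ρ : ContDiff ℝ 3 ρt
  smooth_u : ContDiff ℝ 3 ut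
  pos : ∀ ξ, 0 < ρt ξ
  ode1 : ∀ ξ, -σ * deriv ρt ξ + deriv (fun y => ρt y * ut y) ξ = 0
  ode2 : ∀ ξ, -σ * deriv (fun y => ρt y * ut y) ξ + deriv (fun y => ρt y * (ut y)^2) ξ
        + deriv (fun y => b * ρt y ^ γ) ξ = (2*μ+lam) * deriv (deriv ut) ξ
  limL_ρ : Tendsto ρt atBot (𝓝 ρL)
  limL_u : Tendsto ut atBot (𝓝 uL)
  limR_ρ : Tendsto ρt atTop (𝓝 ρR)
  limR_u : Tendsto ut atTop (𝓝 uR)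



section
lemma nonneg_of_deriv_sign (D D' : ℝ → ℝ) (q r : ℝ)
    (hd : ∀ x ∈ Set.uIcc q r, HasDerivAt D (D' x) x)
    (hsign : ∀ x ∈ Set.uIcc q r, 0 ≤ (x - r) * D' x)
    (h0 : D r = 0) : 0 ≤ D q := by
  rcases le_total q r with h | h
  · rw [Set.uIcc_of_le h] at hd hsign
    have hanti : AntitoneOn D (Set.Icc q r) := by
      apply antitoneOn_of_deriv_nonpos (convex_Icc q r)
      · exact fun x hx => (hd x hx).continuousAt.continuousWithinAt
      · intro x hx
        rw [interior_Icc] at hx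
        exact (hd x ⟨hx.1.le, hx.2.le⟩).differentiableAt.differentiableWithinAt
      · intro x hx
        rw [interior_Icc] at hx
        have hmem : x ∈ Set.Icc q r := ⟨hx.1.le, hx.2.le⟩
        have hs := hsign x hmem
        rw [(hd x hmem).deriv]
        nlinarith [hx.2]
    have := hanti (Set.left_mem_Icc.2 h) (Set.right_mem_Icc.2 h) h
    rw [h0] at this
    exact this
  · rw [Set.uIcc_of_ge h] at hd hsign
    have hmono : MonotoneOn D (Set.Icc r q) := by
      apply monotoneOn_of_deriv_nonneg (convex_Icc r q)
      · exact fun x hx => (hd x hx).continuousAt.continuousWithinAt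
      · intro x hx
        rw [interior_Icc] at hx
        exact (hd x ⟨hx.1.le, hx.2.le⟩).differentiableAt.differentiableWithinAt
      · intro x hx
        rw [interior_Icc] at hx
        have hmem : x ∈ Set.Icc r q := ⟨hx.1.le, hx.2.le⟩
        have hs := hsign x hmem
        rw [(hd x hmem).deriv]
        nlinarith [hx.1]
    have := hmono (Set.left_mem_Icc.2 h) (Set.right_mem_Icc.2 h) h
    rw [h0] at this
    exact this

lemma rpow_tangent {c : ℝ} (hc : c ≤ 0 ∨ 1 ≤ c) {x r : ℝ} (hx : 0 < x) (hr : 0 < r) :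
    r ^ c + c * r ^ (c - 1) * (x - r) ≤ x ^ c := by
  have hpos : ∀ y ∈ Set.uIcc x r, 0 < y := fun y hy =>
    lt_of_lt_of_le (lt_min hx hr) hy.1
  have key := nonneg_of_deriv_sign
    (fun y => y ^ c - r ^ c - c * r ^ (c - 1) * (y - r))
    (fun y => c * y ^ (c - 1) - c * r ^ (c - 1)) x r
    (fun y hy => by
      have h1 : HasDerivAt (fun y : ℝ => y ^ c) (c * y ^ (c - 1)) y :=
        Real.hasDerivAt_rpow_const (Or.inl (hpos y hy).ne')
      have h2 := (h1.sub_const (r ^ c)).sub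
        (((hasDerivAt_id' y).sub_const r).const_mul (c * r ^ (c - 1)))
      show HasDerivAt _ (c * y ^ (c - 1) - c * r ^ (c - 1)) y
      refine h2.congr_deriv ?_
      ring)
    (fun y hy => by
      have hy0 := hpos y hy
      show 0 ≤ (y - r) * (c * y ^ (c - 1) - c * r ^ (c - 1))
      rcases le_total y r with h | h
      · rcases hc with hc | hc
        · have h3 : r ^ (c - 1) ≤ y ^ (c - 1) :=
            Real.rpow_le_rpow_of_nonpos hy0 h (by linarith)
          nlinarith [mul_nonneg (mul_nonneg (neg_nonneg.2 hc) (sub_nonneg.2 h))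
            (sub_nonneg.2 h3)]
        · have h3 : y ^ (c - 1) ≤ r ^ (c - 1) :=
            Real.rpow_le_rpow hy0.le h (by linarith)
          nlinarith [mul_nonneg (mul_nonneg (by linarith : (0:ℝ) ≤ c) (sub_nonneg.2 h))
            (sub_nonneg.2 h3)]
      · rcases hc with hc | hc
        · have h3 : y ^ (c - 1) ≤ r ^ (c - 1) :=
            Real.rpow_le_rpow_of_nonpos hr h (by linarith)
          nlinarith [mul_nonneg (mul_nonneg (neg_nonneg.2 hc) (sub_nonneg.2 h))
            (sub_nonneg.2 h3)]
        · have h3 : r ^ (c - 1) ≤ y ^ (c - 1) :=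
            Real.rpow_le_rpow hr.le h (by linarith)
          nlinarith [mul_nonneg (mul_nonneg (by linarith : (0:ℝ) ≤ c) (sub_nonneg.2 h))
            (sub_nonneg.2 h3)])
    (by simp)
  linarith [key]

lemma abs_sub_le_of_mem_uIcc {x q r : ℝ} (hx : x ∈ Set.uIcc q r) : |x - r| ≤ |q - r| := by
  have h1 : q ⊓ r ≤ x := hx.1
  have h2 : x ≤ q ⊔ r := hx.2
  rcases le_total q r with h | h
  · rw [inf_eq_left.2 h] at h1; rw [sup_eq_right.2 h] at h2
    rw [abs_of_nonpos (by linarith), abs_of_nonpos (by linarith)]; linarith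
  · rw [inf_eq_right.2 h] at h1; rw [sup_eq_left.2 h] at h2
    rw [abs_of_nonneg (by linarith), abs_of_nonneg (by linarith)]; linarith

/-- Middle inequality (lower bound on QRel), exact, no smallness needed. -/
lemma qrel_lower (γ q r : ℝ) (hγ : 1 < γ) (hq : 0 < q) (hr : 0 < r) :
    r ^ (-1/γ - 1) / (2 * γ) * (q - r)^2 - (1 + γ) / (3 * γ^2) * r ^ (-1/γ - 2) * (q - r)^3
      ≤ (q ^ (1 - 1/γ) - r ^ (1 - 1/γ)) / (γ - 1) + r * (q ^ (-1/γ) - r ^ (-1/γ)) := by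
  have hγ0 : (0:ℝ) < γ := by linarith
  have hγne : γ ≠ 0 := ne_of_gt hγ0
  have hγ1ne : γ - 1 ≠ 0 := sub_ne_zero.2 hγ.ne'
  have hpos : ∀ y ∈ Set.uIcc q r, 0 < y := fun y hy =>
    lt_of_lt_of_le (lt_min hq hr) hy.1
  have hγinv : (0:ℝ) < 1/γ := one_div_pos.2 hγ0
  have hcneg : (-1/γ - 1 : ℝ) ≤ 0 := by
    have h := neg_div (γ:ℝ) 1
    linarith [h]
  have key := nonneg_of_deriv_sign
    (fun x => (x ^ (1 - 1/γ) - r ^ (1 - 1/γ)) / (γ - 1) + r * (x ^ (-1/γ) - r ^ (-1/γ))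
      - r ^ (-1/γ - 1) / (2 * γ) * (x - r)^2 + (1 + γ) / (3 * γ^2) * r ^ (-1/γ - 2) * (x - r)^3)
    (fun x => (x - r) * γ⁻¹
      * (x ^ (-1/γ - 1) - r ^ (-1/γ - 1) + (1 + 1/γ) * r ^ (-1/γ - 2) * (x - r)))
    q r
    (fun y hy => by
      have hy0 := hpos y hy
      have h1 : HasDerivAt (fun x : ℝ => x ^ (1 - 1/γ)) ((1 - 1/γ) * y ^ (1 - 1/γ - 1)) y :=
        Real.hasDerivAt_rpow_const (Or.inl hy0.ne')
      have h2 : HasDerivAt (fun x : ℝ => x ^ (-1/γ)) ((-1/γ) * y ^ (-1/γ - 1)) y :=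
        Real.hasDerivAt_rpow_const (Or.inl hy0.ne')
      have h3 := (((h1.sub_const (r ^ (1 - 1/γ))).div_const (γ - 1)).add
          ((h2.sub_const (r ^ (-1/γ))).const_mul r)).sub
          ((((hasDerivAt_id' y).sub_const r).pow 2).const_mul (r ^ (-1/γ - 1) / (2 * γ)))
      have h4 := h3.add ((((hasDerivAt_id' y).sub_const r).pow 3).const_mul
          ((1 + γ) / (3 * γ^2) * r ^ (-1/γ - 2)))
      show HasDerivAt _ ((y - r) * γ⁻¹
        * (y ^ (-1/γ - 1) - r ^ (-1/γ - 1) + (1 + 1/γ) * r ^ (-1/γ - 2) * (y - r))) y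
      refine h4.congr_deriv ?_
      have hJ : y ^ (1 - 1/γ - 1 : ℝ) = y ^ (-1/γ - 1 : ℝ) * y := by
        rw [show (1 - 1/γ - 1 : ℝ) = (-1/γ - 1) + 1 from by ring, Real.rpow_add hy0,
          Real.rpow_one]
      rw [hJ]
      field_simp
      ring)
    (fun y hy => by
      have hy0 := hpos y hy
      show 0 ≤ (y - r) * ((y - r) * γ⁻¹
        * (y ^ (-1/γ - 1) - r ^ (-1/γ - 1) + (1 + 1/γ) * r ^ (-1/γ - 2) * (y - r)))
      have T := rpow_tangent (c := -1/γ - 1) (Or.inl hcneg) hy0 hr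
      rw [show (-1/γ - 1 - 1 : ℝ) = -1/γ - 2 from by ring] at T
      have Tpos : 0 ≤ y ^ (-1/γ - 1) - r ^ (-1/γ - 1)
          + (1 + 1/γ) * r ^ (-1/γ - 2) * (y - r) := by
        ring_nf at T ⊢
        linarith [T]
      nlinarith [mul_nonneg (mul_nonneg (sq_nonneg (y - r)) (inv_nonneg.2 hγ0.le)) Tpos])
    (by simp)
  linarith [key]
end

section
lemma qrel_upper (γ lo δ q r : ℝ) (hγ : 1 < γ) (hlo : 0 < lo) (hδ : 0 < δ)
    (hql : lo ≤ q) (hrl : lo ≤ r) (hqr : |q - r| < δ) :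
    (q ^ (1 - 1/γ) - r ^ (1 - 1/γ)) / (γ - 1) + r * (q ^ (-1/γ) - r ^ (-1/γ))
      ≤ (r ^ (-1/γ - 1) / (2 * γ) + ((1 + 1/γ) * lo ^ (-1/γ - 2) / γ) * δ) * (q - r)^2 := by
  have hγ0 : (0:ℝ) < γ := by linarith
  have hγne : γ ≠ 0 := ne_of_gt hγ0
  have hγ1ne : γ - 1 ≠ 0 := sub_ne_zero.2 hγ.ne'
  have hγinv : (0:ℝ) < 1/γ := one_div_pos.2 hγ0
  have hnd : (-1/γ : ℝ) = -(1/γ) := neg_div γ 1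
  have hq : 0 < q := lt_of_lt_of_le hlo hql
  have hr : 0 < r := lt_of_lt_of_le hlo hrl
  have hpos : ∀ y ∈ Set.uIcc q r, 0 < y := fun y hy =>
    lt_of_lt_of_le (lt_min hq hr) hy.1
  have hloy : ∀ y ∈ Set.uIcc q r, lo ≤ y := fun y hy => le_trans (le_min hql hrl) hy.1
  have hc1 : (-1/γ - 1 : ℝ) ≤ 0 := by rw [hnd]; linarith
  have hc2 : (-1/γ - 2 : ℝ) ≤ 0 := by rw [hnd]; linarith
  set M : ℝ := r ^ (-1/γ - 1) / (2 * γ) + ((1 + 1/γ) * lo ^ (-1/γ - 2) / γ) * δ with hM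
  have key := nonneg_of_deriv_sign
    (fun x => M * (x - r)^2
      - ((x ^ (1 - 1/γ) - r ^ (1 - 1/γ)) / (γ - 1) + r * (x ^ (-1/γ) - r ^ (-1/γ))))
    (fun x => (x - r) * (2 * M - γ⁻¹ * x ^ (-1/γ - 1)))
    q r
    (fun y hy => by
      have hy0 := hpos y hy
      have h1 : HasDerivAt (fun x : ℝ => x ^ (1 - 1/γ)) ((1 - 1/γ) * y ^ (1 - 1/γ - 1)) y :=
        Real.hasDerivAt_rpow_const (Or.inl hy0.ne')
      have h2 : HasDerivAt (fun x : ℝ => x ^ (-1/γ)) ((-1/γ) * y ^ (-1/γ - 1)) y :=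
        Real.hasDerivAt_rpow_const (Or.inl hy0.ne')
      have h3 := ((((hasDerivAt_id' y).sub_const r).pow 2).const_mul M).sub
        (((h1.sub_const (r ^ (1 - 1/γ))).div_const (γ - 1)).add
          ((h2.sub_const (r ^ (-1/γ))).const_mul r))
      show HasDerivAt _ ((y - r) * (2 * M - γ⁻¹ * y ^ (-1/γ - 1))) y
      refine h3.congr_deriv ?_
      have hJ : y ^ (1 - 1/γ - 1 : ℝ) = y ^ (-1/γ - 1 : ℝ) * y := by
        rw [show (1 - 1/γ - 1 : ℝ) = (-1/γ - 1) + 1 from by ring, Real.rpow_add hy0,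
          Real.rpow_one]
      rw [hJ]
      field_simp
      ring)
    (fun y hy => by
      have hy0 := hpos y hy
      have hylo := hloy y hy
      have hyr : |y - r| ≤ |q - r| := abs_sub_le_of_mem_uIcc hy
      show 0 ≤ (y - r) * ((y - r) * (2 * M - γ⁻¹ * y ^ (-1/γ - 1)))
      have hsplit : y ^ (-1/γ - 1) - r ^ (-1/γ - 1) ≤ (1 + 1/γ) * (lo ^ (-1/γ - 2) * δ) := by
        rcases le_total r y with hc | hc
        · have hmono : y ^ (-1/γ - 1 : ℝ) ≤ r ^ (-1/γ - 1 : ℝ) :=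
            Real.rpow_le_rpow_of_nonpos hr hc hc1
          have hrhs : (0:ℝ) ≤ (1 + 1/γ) * (lo ^ (-1/γ - 2 : ℝ) * δ) :=
            mul_nonneg (by linarith) (mul_nonneg (Real.rpow_pos_of_pos hlo _).le hδ.le)
          linarith
        · have T := rpow_tangent (c := -1/γ - 1) (Or.inl hc1) hr hy0
          rw [show (-1/γ - 1 - 1 : ℝ) = -1/γ - 2 from by ring] at T
          have hB : y ^ (-1/γ - 2 : ℝ) ≤ lo ^ (-1/γ - 2 : ℝ) :=
            Real.rpow_le_rpow_of_nonpos hlo hylo hc2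
          have hry : r - y ≤ δ := by
            rw [abs_of_nonpos (by linarith : y - r ≤ 0)] at hyr
            linarith [hqr]
          have hm : y ^ (-1/γ - 2 : ℝ) * (r - y) ≤ lo ^ (-1/γ - 2 : ℝ) * δ :=
            mul_le_mul hB hry (by linarith) (Real.rpow_pos_of_pos hlo _).le
          have hm2 := mul_le_mul_of_nonneg_left hm (by linarith : (0:ℝ) ≤ 1 + 1/γ)
          ring_nf at T hm2 ⊢
          linarith [T, hm2]
      have h2M : γ⁻¹ * y ^ (-1/γ - 1) ≤ 2 * M := by
        have hsp := mul_le_mul_of_nonneg_left hsplit (inv_nonneg.2 hγ0.le)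
        have hCδ : (0:ℝ) ≤ γ⁻¹ * ((1 + 1/γ) * (lo ^ (-1/γ - 2 : ℝ) * δ)) :=
          mul_nonneg (inv_nonneg.2 hγ0.le)
            (mul_nonneg (by linarith) (mul_nonneg (Real.rpow_pos_of_pos hlo _).le hδ.le))
        rw [hM]
        ring_nf at hsp hCδ ⊢
        linarith [hsp, hCδ]
      nlinarith [mul_nonneg (sq_nonneg (y - r)) (sub_nonneg.2 h2M)])
    (by simp)
  linarith [key]
end

section
set_option maxHeartbeats 2000000 in
lemma prel_upper (γ lo hi δ q r : ℝ) (hγ : 1 < γ) (hlo : 0 < lo) (hδ : 0 < δ)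
    (hql : lo ≤ q) (hrl : lo ≤ r) (hqh : q ≤ hi) (hrh : r ≤ hi) (hqr : |q - r| < δ) :
    q - r + γ * r ^ (1 + 1/γ) * (q ^ (-1/γ) - r ^ (-1/γ))
      ≤ ((γ + 1) / (2 * γ) * (1 / r)
          + ((1 + 1/γ) * (2 + 1/γ) * hi ^ (1 + 1/γ) * lo ^ (-1/γ - 3)) * δ) * (q - r)^2 := by
  have hγ0 : (0:ℝ) < γ := by linarith
  have hγne : γ ≠ 0 := ne_of_gt hγ0
  have hγinv : (0:ℝ) < 1/γ := one_div_pos.2 hγ0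
  have hnd : (-1/γ : ℝ) = -(1/γ) := neg_div γ 1
  have hq : 0 < q := lt_of_lt_of_le hlo hql
  have hr : 0 < r := lt_of_lt_of_le hlo hrl
  have hhi : 0 < hi := lt_of_lt_of_le hq hqh
  have hpos : ∀ y ∈ Set.uIcc q r, 0 < y := fun y hy =>
    lt_of_lt_of_le (lt_min hq hr) hy.1
  have hloy : ∀ y ∈ Set.uIcc q r, lo ≤ y := fun y hy => le_trans (le_min hql hrl) hy.1
  have hc1 : (-1/γ - 1 : ℝ) ≤ 0 := by rw [hnd]; linarith
  have hc2 : (-1/γ - 2 : ℝ) ≤ 0 := by rw [hnd]; linarith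
  have hc3 : (-1/γ - 3 : ℝ) ≤ 0 := by rw [hnd]; linarith
  have h1b : (0:ℝ) ≤ 1 + 1/γ := by linarith
  have h2b : (0:ℝ) ≤ 2 + 1/γ := by linarith
  have hMδ : (0:ℝ) ≤ ((1 + 1/γ) * (2 + 1/γ) * hi ^ (1 + 1/γ : ℝ) * lo ^ (-1/γ - 3 : ℝ)) * δ :=
    mul_nonneg (mul_nonneg (mul_nonneg (mul_nonneg h1b h2b)
      (Real.rpow_pos_of_pos hhi _).le) (Real.rpow_pos_of_pos hlo _).le) hδ.le
  set M : ℝ := (γ + 1) / (2 * γ) * (1 / r)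
      + ((1 + 1/γ) * (2 + 1/γ) * hi ^ (1 + 1/γ) * lo ^ (-1/γ - 3)) * δ with hM
  have h2Mlb : 2 * ((γ + 1) / (2 * γ) * (1 / r)) = (1 + 1/γ) * r⁻¹ := by field_simp
  have Ia : r ^ (1 + 1/γ : ℝ) * r ^ (-1/γ - 1 : ℝ) = 1 := by
    rw [← Real.rpow_add hr, show (1 + 1/γ) + (-1/γ - 1) = (0:ℝ) from by ring, Real.rpow_zero]
  have Ib : r ^ (1 + 1/γ : ℝ) * r ^ (-1/γ - 2 : ℝ) = r⁻¹ := by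
    rw [← Real.rpow_add hr, show (1 + 1/γ) + (-1/γ - 2) = (-1:ℝ) from by ring,
      Real.rpow_neg_one]
  have hA : (0:ℝ) < r ^ (1 + 1/γ : ℝ) := Real.rpow_pos_of_pos hr _
  have key := nonneg_of_deriv_sign
    (fun x => M * (x - r)^2 - (x - r + γ * r ^ (1 + 1/γ) * (x ^ (-1/γ) - r ^ (-1/γ))))
    (fun x => 2 * M * (x - r) - (1 - r ^ (1 + 1/γ) * x ^ (-1/γ - 1)))
    q r
    (fun y hy => by
      have hy0 := hpos y hy
      have h2 : HasDerivAt (fun x : ℝ => x ^ (-1/γ)) ((-1/γ) * y ^ (-1/γ - 1)) y :=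
        Real.hasDerivAt_rpow_const (Or.inl hy0.ne')
      have h3 := ((((hasDerivAt_id' y).sub_const r).pow 2).const_mul M).sub
        (((hasDerivAt_id' y).sub_const r).add
          ((h2.sub_const (r ^ (-1/γ))).const_mul (γ * r ^ (1 + 1/γ))))
      show HasDerivAt _ (2 * M * (y - r) - (1 - r ^ (1 + 1/γ) * y ^ (-1/γ - 1))) y
      refine h3.congr_deriv ?_
      field_simp
      ring)
    (fun y hy => by
      have hy0 := hpos y hy
      have hylo := hloy y hy
      have hyr : |y - r| ≤ |q - r| := abs_sub_le_of_mem_uIcc hy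
      show 0 ≤ (y - r) * (2 * M * (y - r) - (1 - r ^ (1 + 1/γ) * y ^ (-1/γ - 1)))
      rcases le_total r y with hc | hc
      · -- r ≤ y : no smallness needed
        have T := rpow_tangent (c := -1/γ - 1) (Or.inl hc1) hy0 hr
        rw [show (-1/γ - 1 - 1 : ℝ) = -1/γ - 2 from by ring] at T
        have hT' := mul_le_mul_of_nonneg_left T hA.le
        have hL : r ^ (1 + 1/γ : ℝ) * (r ^ (-1/γ - 1 : ℝ)
              + (-1/γ - 1) * r ^ (-1/γ - 2 : ℝ) * (y - r))
            = 1 + (-1/γ - 1) * r⁻¹ * (y - r) := by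
          linear_combination Ia + ((-1/γ - 1) * (y - r)) * Ib
        rw [hL] at hT'
        have hE : 1 - r ^ (1 + 1/γ : ℝ) * y ^ (-1/γ - 1 : ℝ)
            ≤ ((1 + 1/γ) * r⁻¹) * (y - r) := by
          ring_nf at hT' ⊢
          linarith [hT']
        have h2M : (1 + 1/γ) * r⁻¹ ≤ 2 * M := by
          rw [hM]
          linarith [h2Mlb, hMδ]
        nlinarith [mul_le_mul_of_nonneg_left hE (by linarith : (0:ℝ) ≤ y - r),
          mul_le_mul_of_nonneg_left
            (mul_le_mul_of_nonneg_right h2M (by linarith : (0:ℝ) ≤ y - r))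
            (by linarith : (0:ℝ) ≤ y - r)]
      · -- y ≤ r : use the δ-correction
        have T2 := rpow_tangent (c := -1/γ - 1) (Or.inl hc1) hr hy0
        rw [show (-1/γ - 1 - 1 : ℝ) = -1/γ - 2 from by ring] at T2
        have T3 := rpow_tangent (c := -1/γ - 2) (Or.inl hc2) hr hy0
        rw [show (-1/γ - 2 - 1 : ℝ) = -1/γ - 3 from by ring] at T3
        have By3 : y ^ (-1/γ - 3 : ℝ) ≤ lo ^ (-1/γ - 3 : ℝ) :=
          Real.rpow_le_rpow_of_nonpos hlo hylo hc3
        have BA : r ^ (1 + 1/γ : ℝ) ≤ hi ^ (1 + 1/γ : ℝ) :=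
          Real.rpow_le_rpow hr.le hrh (by linarith)
        have hry : r - y ≤ δ := by
          rw [abs_of_nonpos (by linarith : y - r ≤ 0)] at hyr
          linarith [hqr]
        have s1 : y ^ (-1/γ - 2 : ℝ) - r ^ (-1/γ - 2 : ℝ)
            ≤ (2 + 1/γ) * (y ^ (-1/γ - 3 : ℝ) * (r - y)) := by
          ring_nf at T3 ⊢
          linarith [T3]
        have s2 : y ^ (-1/γ - 3 : ℝ) * (r - y) ≤ lo ^ (-1/γ - 3 : ℝ) * δ :=
          mul_le_mul By3 hry (by linarith) (Real.rpow_pos_of_pos hlo _).le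
        have s2' := mul_le_mul_of_nonneg_left s2 h2b
        have sdiff : y ^ (-1/γ - 2 : ℝ) - r ^ (-1/γ - 2 : ℝ)
            ≤ (2 + 1/γ) * (lo ^ (-1/γ - 3 : ℝ) * δ) := by linarith [s1, s2']
        have s3 : r ^ (1 + 1/γ : ℝ) * (y ^ (-1/γ - 2 : ℝ) - r ^ (-1/γ - 2 : ℝ))
            ≤ hi ^ (1 + 1/γ : ℝ) * ((2 + 1/γ) * (lo ^ (-1/γ - 3 : ℝ) * δ)) := by
          rcases le_total (y ^ (-1/γ - 2 : ℝ) - r ^ (-1/γ - 2 : ℝ)) 0 with hd0 | hd0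
          · have hlhs : r ^ (1 + 1/γ : ℝ) * (y ^ (-1/γ - 2 : ℝ) - r ^ (-1/γ - 2 : ℝ)) ≤ 0 :=
              mul_nonpos_of_nonneg_of_nonpos hA.le hd0
            have hrhs : (0:ℝ) ≤ hi ^ (1 + 1/γ : ℝ) * ((2 + 1/γ) * (lo ^ (-1/γ - 3 : ℝ) * δ)) :=
              mul_nonneg (Real.rpow_pos_of_pos hhi _).le
                (mul_nonneg h2b (mul_nonneg (Real.rpow_pos_of_pos hlo _).le hδ.le))
            linarith
          · exact mul_le_mul BA sdiff hd0 (Real.rpow_pos_of_pos hhi _).le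
        have e1 : r ^ (1 + 1/γ : ℝ) * y ^ (-1/γ - 2 : ℝ)
            = r⁻¹ + r ^ (1 + 1/γ : ℝ) * (y ^ (-1/γ - 2 : ℝ) - r ^ (-1/γ - 2 : ℝ)) := by
          linear_combination Ib
        have s3' := mul_le_mul_of_nonneg_left s3 h1b
        have s4 : (1 + 1/γ) * (r ^ (1 + 1/γ : ℝ) * y ^ (-1/γ - 2 : ℝ)) ≤ 2 * M := by
          rw [hM, e1]
          ring_nf at s3' h2Mlb hMδ ⊢
          linarith [s3', h2Mlb, hMδ]
        have hT2' := mul_le_mul_of_nonneg_left T2 hA.le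
        have hL2 : r ^ (1 + 1/γ : ℝ) * (y ^ (-1/γ - 1 : ℝ)
              + (-1/γ - 1) * y ^ (-1/γ - 2 : ℝ) * (r - y))
            = r ^ (1 + 1/γ : ℝ) * y ^ (-1/γ - 1 : ℝ)
              + (-1/γ - 1) * (r ^ (1 + 1/γ : ℝ) * y ^ (-1/γ - 2 : ℝ)) * (r - y) := by ring
        rw [hL2, Ia] at hT2'
        have s5 : r ^ (1 + 1/γ : ℝ) * y ^ (-1/γ - 1 : ℝ) - 1
            ≤ ((1 + 1/γ) * (r ^ (1 + 1/γ : ℝ) * y ^ (-1/γ - 2 : ℝ))) * (r - y) := by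
          ring_nf at hT2' ⊢
          linarith [hT2']
        have hE2 : r ^ (1 + 1/γ : ℝ) * y ^ (-1/γ - 1 : ℝ) - 1 ≤ 2 * M * (r - y) := by
          have hs4r := mul_le_mul_of_nonneg_right s4 (by linarith : (0:ℝ) ≤ r - y)
          ring_nf at hs4r s5 ⊢
          linarith [hs4r, s5]
        nlinarith [mul_le_mul_of_nonneg_left hE2 (by linarith : (0:ℝ) ≤ r - y)])
    (by simp)
  linarith [key]
end

set_option maxHeartbeats 2000000 in
/-- Lemma 2.5 (3): sharp quadratic expansions of the relative
quantities `p(v|w)` and `Q(v|w)` in terms of `|p(v) - p(w)|`. -/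
theorem relative_quantities_sharp_estimates
    (γ vplus : ℝ) (hγ : 1 < γ) (hvplus : 0 < vplus) :
    ∃ C > 0, ∃ δstar > 0, ∀ δ : ℝ, 0 < δ → δ < δstar →
      ∀ v w : ℝ, 0 < v → 0 < w →
        |pfn γ v - pfn γ w| < δ → |pfn γ w - pfn γ vplus| < δ →
        (pRel γ v w ≤ ((γ + 1) / (2 * γ) * (1 / pfn γ w) + C * δ) * |pfn γ v - pfn γ w|^2) ∧
        ((pfn γ w ^ (-1/γ - 1) / (2 * γ)) * |pfn γ v - pfn γ w|^2
            - ((1 + γ) / (3 * γ^2)) * pfn γ w ^ (-1/γ - 2) * (pfn γ v - pfn γ w)^3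
          ≤ QRel γ v w) ∧
        (QRel γ v w ≤ (pfn γ w ^ (-1/γ - 1) / (2 * γ) + C * δ) * |pfn γ v - pfn γ w|^2) := by
  have hγ0 : (0:ℝ) < γ := by linarith
  have hγne : γ ≠ 0 := ne_of_gt hγ0
  have hγinv : (0:ℝ) < 1/γ := one_div_pos.2 hγ0
  set r0 : ℝ := pfn γ vplus with hr0
  have hr00 : 0 < r0 := Real.rpow_pos_of_pos hvplus (-γ)
  have hC1 : (0:ℝ) < (1 + 1/γ) * (2 + 1/γ) * (2*r0) ^ (1 + 1/γ : ℝ)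
      * ((r0/2) ^ (-1/γ - 3 : ℝ)) :=
    mul_pos (mul_pos (mul_pos (by linarith) (by linarith))
      (Real.rpow_pos_of_pos (by linarith) _)) (Real.rpow_pos_of_pos (by linarith) _)
  have hC3 : (0:ℝ) < (1 + 1/γ) * ((r0/2) ^ (-1/γ - 2 : ℝ)) / γ :=
    div_pos (mul_pos (by linarith) (Real.rpow_pos_of_pos (by linarith) _)) hγ0
  refine ⟨(1 + 1/γ) * (2 + 1/γ) * (2*r0) ^ (1 + 1/γ) * ((r0/2) ^ (-1/γ - 3))
      + (1 + 1/γ) * ((r0/2) ^ (-1/γ - 2)) / γ + 1, by linarith, r0/4, by linarith, ?_⟩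
  intro δ hδ0 hδs v w hv0 hw0 hpq hpr
  set q : ℝ := pfn γ v with hq
  set r : ℝ := pfn γ w with hrr
  have hqdef : q = v ^ (-γ) := hq
  have hrdef : r = w ^ (-γ) := hrr
  have habs1 := abs_lt.1 hpq
  have habs2 := abs_lt.1 hpr
  have hqlo : r0/2 ≤ q := by linarith
  have hqhi : q ≤ 2*r0 := by linarith
  have hrlo : r0/2 ≤ r := by linarith
  have hrhi : r ≤ 2*r0 := by linarith
  have hq0 : 0 < q := by linarith
  have hr0' : 0 < r := by linarith
  -- conversion identities
  have hqv : q ^ (-1/γ : ℝ) = v := by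
    rw [hqdef, ← Real.rpow_mul hv0.le, show (-γ) * (-1/γ) = (1:ℝ) from by
      field_simp, Real.rpow_one]
  have hrw : r ^ (-1/γ : ℝ) = w := by
    rw [hrdef, ← Real.rpow_mul hw0.le, show (-γ) * (-1/γ) = (1:ℝ) from by
      field_simp, Real.rpow_one]
  have hwA : w ^ (-γ - 1 : ℝ) = r ^ (1 + 1/γ : ℝ) := by
    rw [hrdef, ← Real.rpow_mul hw0.le, show (-γ) * (1 + 1/γ) = -γ - 1 from by
      field_simp; ring]
  have hv1 : v ^ (1 - γ : ℝ) = q ^ (1 - 1/γ : ℝ) := by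
    rw [hqdef, ← Real.rpow_mul hv0.le, show (-γ) * (1 - 1/γ) = 1 - γ from by
      field_simp; ring]
  have hw1 : w ^ (1 - γ : ℝ) = r ^ (1 - 1/γ : ℝ) := by
    rw [hrdef, ← Real.rpow_mul hw0.le, show (-γ) * (1 - 1/γ) = 1 - γ from by
      field_simp; ring]
  have hPRel : pRel γ v w = q - r + γ * r ^ (1 + 1/γ : ℝ) * (q ^ (-1/γ : ℝ) - r ^ (-1/γ : ℝ)) := by
    rw [pRel, pderivfn, ← hq, ← hrr, hwA, hqv, hrw]
    ring
  have hQRel : QRel γ v w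
      = (q ^ (1 - 1/γ : ℝ) - r ^ (1 - 1/γ : ℝ)) / (γ - 1)
        + r * (q ^ (-1/γ : ℝ) - r ^ (-1/γ : ℝ)) := by
    rw [QRel, Qfn, Qfn, ← hrr, hv1, hw1, hqv, hrw]
    ring
  have H1 := prel_upper γ (r0/2) (2*r0) δ q r hγ (by linarith) hδ0 hqlo hrlo hqhi hrhi hpq
  have H2 := qrel_lower γ q r hγ hq0 hr0'
  have H3 := qrel_upper γ (r0/2) δ q r hγ (by linarith) hδ0 hqlo hrlo hpq
  have hslack1 : (0:ℝ) ≤ (((1 + 1/γ) * ((r0/2) ^ (-1/γ - 2 : ℝ)) / γ + 1) * δ) * (q - r)^2 :=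
    mul_nonneg (mul_nonneg (by linarith) hδ0.le) (sq_nonneg _)
  have hslack3 : (0:ℝ) ≤ (((1 + 1/γ) * (2 + 1/γ) * (2*r0) ^ (1 + 1/γ : ℝ)
      * ((r0/2) ^ (-1/γ - 3 : ℝ)) + 1) * δ) * (q - r)^2 :=
    mul_nonneg (mul_nonneg (by linarith) hδ0.le) (sq_nonneg _)
  refine ⟨?_, ?_, ?_⟩
  · rw [hPRel, sq_abs]
    nlinarith [H1, hslack1]
  · rw [hQRel, sq_abs]
    linarith [H2]
  · rw [hQRel, sq_abs]
    nlinarith [H3, hslack3]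

end NS3D
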